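/- Let X be a compact Hausdorff topological space, let X₀ be a dense subset of X, and let A be a uniformly bounded set of continuous real-valued functions on X. Suppose that for every sequence (f_m) of elements of A and every sequence (x_n) of points of X₀, whenever both iterated limits lim_n lim_m f_m(x_n) and lim_m lim_n f_m(x_n) exist, they are equal. Then the closure of A in the product topology on ℝ^X is a compact set all of whose elements are continuous functions; that is, A is relatively compact in C(X) equipped with the topology of pointwise convergence. -/

import Mathlib

open Filter Topology

private lemma exists_seq_aux' {α : Type*} (P : List α → α → Prop)
    (h : ∀ l, ∃ a, P l a) :
    ∃ F : ℕ → α, ∀ n, P ((List.range n).map F) (F n) := by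
  have step : ∀ l : List α, {a // P l a} := fun l => ⟨(h l).choose, (h l).choose_spec⟩
  let hist : ℕ → List α := fun n => Nat.rec [] (fun _ ih => ih ++ [(step ih).1]) n
  let F : ℕ → α := fun n => (step (hist n)).1
  have histsucc : ∀ n, hist (n + 1) = hist n ++ [F n] := fun n => rfl
  have key : ∀ n, hist n = (List.range n).map F := by
    intro n
    induction n with
    | zero => simp [hist]
    | succ n ih =>
      rw [histsucc n, List.range_succ, List.map_append, List.map_singleton, ih]
  refine ⟨F, fun n => ?_⟩
  rw [← key n]
  exact (step (hist n)).2

/-- If `g` is not continuous, there is a point `y` and `ε > 0` such that every open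
neighbourhood of `y` contains a point of the dense set `X₀` where `g` differs from `g y`
by at least `ε`. -/
private lemma exists_bad_point {X : Type*} [TopologicalSpace X] {X₀ : Set X} (hX₀ : Dense X₀)
    {g : X → ℝ} (hg : ¬ Continuous g) :
    ∃ y : X, ∃ ε > (0:ℝ), ∀ U : Set X, IsOpen U → y ∈ U → ∃ x ∈ U ∩ X₀, ε ≤ |g x - g y| := by
  by_contra h
  push_neg at h
  apply hg
  rw [continuous_iff_continuousAt]
  intro y
  rw [ContinuousAt, Metric.tendsto_nhds]
  intro ε hε
  obtain ⟨U, hUopen, hyU, hU⟩ := h y (ε / 3) (by linarith)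
  filter_upwards [hUopen.mem_nhds hyU] with z hz
  obtain ⟨V, hVopen, hzV, hV⟩ := h z (ε / 3) (by linarith)
  obtain ⟨x, hxUV, hxX₀⟩ := hX₀.inter_open_nonempty (U ∩ V) (hUopen.inter hVopen) ⟨z, hz, hzV⟩
  have h1 : |g x - g y| < ε / 3 := hU x ⟨hxUV.1, hxX₀⟩
  have h2 : |g x - g z| < ε / 3 := hV x ⟨hxUV.2, hxX₀⟩
  rw [Real.dist_eq]
  calc |g z - g y| ≤ |g x - g z| + |g x - g y| := by
        rw [abs_sub_comm (g x) (g z)]; exact abs_sub_le _ _ _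
    _ < ε := by linarith

/-- Compactness corollary of Grothendieck's double limit theorem:
if the double limit condition holds for `A` relative to a dense set `X₀`,
then the pointwise closure of `A` is compact and consists of continuous functions,
i.e. `A` is relatively compact in `C(X)` with the topology of pointwise convergence. -/
theorem relatively_compact_of_double_limit {X : Type*} [TopologicalSpace X] [CompactSpace X]
    [T2Space X]
    (X₀ : Set X) (hX₀ : Dense X₀)
    (A : Set (X → ℝ)) (hcont : ∀ f ∈ A, Continuous f)
    (C : ℝ) (hbd : ∀ f ∈ A, ∀ x, |f x| ≤ C)
    (hdl : ∀ (f : ℕ → X → ℝ), (∀ m, f m ∈ A) →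
        ∀ (x : ℕ → X), (∀ n, x n ∈ X₀) →
        ∀ (c d : ℕ → ℝ) (r s : ℝ),
          (∀ n, Tendsto (fun m => f m (x n)) atTop (𝓝 (c n))) →
          Tendsto c atTop (𝓝 r) →
          (∀ m, Tendsto (fun n => f m (x n)) atTop (𝓝 (d m))) →
          Tendsto d atTop (𝓝 s) →
          r = s) :
    IsCompact (closure A) ∧ ∀ g ∈ closure A, Continuous g := by
  classical
  set S : Set (X → ℝ) := Set.pi Set.univ (fun _ => Set.Icc (-C) C) with hS
  have hAS : A ⊆ S := fun f hf x _ => Set.mem_Icc.mpr (abs_le.mp (hbd f hf x))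
  have hSc : IsCompact S := isCompact_univ_pi fun _ => isCompact_Icc
  have hScl : IsClosed S := isClosed_set_pi fun _ _ => isClosed_Icc
  have hclS : closure A ⊆ S := closure_minimal hAS hScl
  refine ⟨hSc.of_isClosed_subset isClosed_closure hclS, ?_⟩
  intro g hgA
  by_contra hg
  obtain ⟨y, ε, hε, hbad⟩ := exists_bad_point hX₀ hg
  have hgbd : ∀ x, |g x| ≤ C := fun x => abs_le.mpr (hclS hgA x (Set.mem_univ x))
  -- approximate g at finitely many points by elements of A
  have hApprox : ∀ (L : List X) (δ : ℝ), 0 < δ → ∃ f ∈ A, ∀ x ∈ L, |f x - g x| < δ := by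
    intro L δ hδ
    have hev : ∀ᶠ h in 𝓝 g, ∀ x ∈ L, |h x - g x| < δ := by
      induction L with
      | nil => simp
      | cons a L ih =>
        have ha : ∀ᶠ h in 𝓝 g, |h a - g a| < δ := by
          have ht : Tendsto (fun h : X → ℝ => h a) (𝓝 g) (𝓝 (g a)) :=
            (continuous_apply a).tendsto g
          filter_upwards [ht (Metric.ball_mem_nhds (g a) hδ)] with h hh
          simpa [Real.dist_eq] using hh
        filter_upwards [ha, ih] with h h1 h2
        simpa [List.forall_mem_cons] using ⟨h1, h2⟩
    obtain ⟨f, hfP, hfA⟩ := mem_closure_iff_nhds.mp hgA _ hev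
    exact ⟨f, hfA, hfP⟩
  -- find points of X₀ near y (w.r.t. finitely many continuous functions) where g is far
  have hPoint : ∀ (L : List (X → ℝ)), (∀ f ∈ L, Continuous f) → ∀ δ : ℝ, 0 < δ →
      ∃ x ∈ X₀, ε ≤ |g x - g y| ∧ ∀ f ∈ L, |f x - f y| < δ := by
    intro L hL δ hδ
    have hU : ∀ (M : List (X → ℝ)), (∀ f ∈ M, Continuous f) →
        IsOpen {x | ∀ f ∈ M, |f x - f y| < δ} := by
      intro M
      induction M with
      | nil => intro _; simp
      | cons a M ih =>
        intro hM
        have h1 : IsOpen {x | |a x - a y| < δ} := by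
          have hc : Continuous fun x => |a x - a y| :=
            ((hM a List.mem_cons_self).sub continuous_const).abs
          exact isOpen_Iio.preimage hc
        have h2 := ih (fun f hf => hM f (List.mem_cons_of_mem _ hf))
        convert h1.inter h2 using 1
        ext x
        simp [List.forall_mem_cons, Set.mem_inter_iff]
    have hy : y ∈ {x | ∀ f ∈ L, |f x - f y| < δ} := fun f _ => by simpa using hδ
    obtain ⟨x, ⟨hxU, hxX₀⟩, hxε⟩ := hbad _ (hU L hL) hy
    exact ⟨x, hxX₀, hxε, hxU⟩
  -- inductive construction of the sequences
  have hexists : ∀ l : List ((X → ℝ) × X), ∃ p : (X → ℝ) × X,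
      (∀ q ∈ l, q.1 ∈ A ∧ q.2 ∈ X₀) →
      (p.1 ∈ A ∧ p.2 ∈ X₀ ∧ |p.1 y - g y| < 1 / (l.length + 1) ∧
       (∀ q ∈ l, |p.1 q.2 - g q.2| < 1 / (l.length + 1)) ∧
       ε ≤ |g p.2 - g y| ∧ |p.1 p.2 - p.1 y| < 1 / (l.length + 1) ∧
       (∀ q ∈ l, |q.1 p.2 - q.1 y| < 1 / (l.length + 1))) := by
    intro l
    by_cases hl : ∀ q ∈ l, q.1 ∈ A ∧ q.2 ∈ X₀
    · have hδ : (0:ℝ) < 1 / (l.length + 1) := by positivity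
      obtain ⟨f, hfA, hf⟩ := hApprox (y :: l.map Prod.snd) _ hδ
      obtain ⟨x, hxX₀, hxε, hx⟩ := hPoint (f :: l.map Prod.fst)
        (by
          intro h' hh
          rcases List.mem_cons.mp hh with h1 | h2
          · rw [h1]; exact hcont f hfA
          · obtain ⟨q, hq, rfl⟩ := List.mem_map.mp h2
            exact hcont q.1 (hl q hq).1) _ hδ
      refine ⟨(f, x), fun _ => ⟨hfA, hxX₀, ?_, ?_, hxε, ?_, ?_⟩⟩
      · exact hf y List.mem_cons_self
      · intro q hq
        exact hf q.2 (List.mem_cons_of_mem _ (List.mem_map.mpr ⟨q, hq, rfl⟩))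
      · exact hx f List.mem_cons_self
      · intro q hq
        exact hx q.1 (List.mem_cons_of_mem _ (List.mem_map.mpr ⟨q, hq, rfl⟩))
    · exact ⟨(fun _ => 0, y), fun h => absurd h hl⟩
  obtain ⟨F, hF⟩ := exists_seq_aux' _ hexists
  set fs : ℕ → X → ℝ := fun m => (F m).1 with hfs
  set xs : ℕ → X := fun n => (F n).2 with hxs
  have hmem₁ : ∀ {n q}, q ∈ (List.range n).map F → ∃ k, k < n ∧ F k = q := by
    intro n q h
    obtain ⟨k, hk, rfl⟩ := List.mem_map.mp h
    exact ⟨k, List.mem_range.mp hk, rfl⟩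
  have hmem₂ : ∀ {n k}, k < n → F k ∈ (List.range n).map F := fun hk =>
    List.mem_map.mpr ⟨_, List.mem_range.mpr hk, rfl⟩
  have hlen : ∀ n, (((List.range n).map F).length : ℝ) + 1 = (n : ℝ) + 1 := by
    intro n; simp
  -- membership of all constructed elements
  have membAX : ∀ n, fs n ∈ A ∧ xs n ∈ X₀ := by
    intro n
    induction n using Nat.strong_induction_on with
    | _ n ih =>
      have := hF n (fun q hq => by
        obtain ⟨k, hk, rfl⟩ := hmem₁ hq
        exact ih k hk)
      exact ⟨this.1, this.2.1⟩
  have hQ : ∀ n, (fs n ∈ A ∧ xs n ∈ X₀ ∧ |fs n y - g y| < 1 / (n + 1) ∧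
       (∀ q ∈ (List.range n).map F, |fs n q.2 - g q.2| < 1 / ((n:ℝ) + 1)) ∧
       ε ≤ |g (xs n) - g y| ∧ |fs n (xs n) - fs n y| < 1 / ((n:ℝ) + 1) ∧
       (∀ q ∈ (List.range n).map F, |q.1 (xs n) - q.1 y| < 1 / ((n:ℝ) + 1))) := by
    intro n
    have := hF n (fun q hq => by
      obtain ⟨k, hk, rfl⟩ := hmem₁ hq
      exact membAX k)
    rwa [hlen n] at this
  have fact1 : ∀ n m, n < m → |fs m (xs n) - g (xs n)| < 1 / ((m:ℝ) + 1) :=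
    fun n m hnm => (hQ m).2.2.2.1 (F n) (hmem₂ hnm)
  have fact2 : ∀ k m, k < m → |fs k (xs m) - fs k y| < 1 / ((m:ℝ) + 1) :=
    fun k m hkm => (hQ m).2.2.2.2.2.2 (F k) (hmem₂ hkm)
  have fact3 : ∀ m, |fs m (xs m) - fs m y| < 1 / ((m:ℝ) + 1) := fun m => (hQ m).2.2.2.2.2.1
  have fact4 : ∀ m, |fs m y - g y| < 1 / ((m:ℝ) + 1) := fun m => (hQ m).2.2.1
  have fact5 : ∀ n, ε ≤ |g (xs n) - g y| := fun n => (hQ n).2.2.2.2.1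
  -- the limits
  have h1 : ∀ n, Tendsto (fun m => fs m (xs n)) atTop (𝓝 (g (xs n))) := by
    intro n
    rw [tendsto_iff_dist_tendsto_zero]
    apply squeeze_zero' (Eventually.of_forall fun m => dist_nonneg)
      (g := fun m : ℕ => 1 / ((m:ℝ) + 1)) _ tendsto_one_div_add_atTop_nhds_zero_nat
    filter_upwards [eventually_gt_atTop n] with m hm
    rw [Real.dist_eq]
    exact (fact1 n m hm).le
  have h3 : ∀ m, Tendsto (fun n => fs m (xs n)) atTop (𝓝 (fs m y)) := by
    intro m
    rw [tendsto_iff_dist_tendsto_zero]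
    apply squeeze_zero' (Eventually.of_forall fun n => dist_nonneg)
      (g := fun n : ℕ => 1 / ((n:ℝ) + 1)) _ tendsto_one_div_add_atTop_nhds_zero_nat
    filter_upwards [eventually_ge_atTop m] with n hn
    rw [Real.dist_eq]
    rcases lt_or_eq_of_le hn with h | h
    · exact (fact2 m n h).le
    · subst h; exact (fact3 m).le
  have h4 : Tendsto (fun m => fs m y) atTop (𝓝 (g y)) := by
    rw [tendsto_iff_dist_tendsto_zero]
    apply squeeze_zero' (Eventually.of_forall fun m => dist_nonneg)
      (g := fun m : ℕ => 1 / ((m:ℝ) + 1)) _ tendsto_one_div_add_atTop_nhds_zero_nat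
    filter_upwards with m
    rw [Real.dist_eq]
    exact (fact4 m).le
  -- extract a convergent subsequence of (g (xs n))
  obtain ⟨r, _, φ, hφ, hφlim⟩ := tendsto_subseq_of_bounded (Metric.isBounded_Icc (-C) C)
    (x := fun n => g (xs n)) (fun n => Set.mem_Icc.mpr (abs_le.mp (hgbd (xs n))))
  -- apply the double limit hypothesis
  have hrs : r = g y := by
    apply hdl fs (fun m => (membAX m).1) (fun n => xs (φ n)) (fun n => (membAX (φ n)).2)
      (fun n => g (xs (φ n))) (fun m => fs m y) r (g y)
    · exact fun n => h1 (φ n)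
    · exact hφlim
    · exact fun m => (h3 m).comp hφ.tendsto_atTop
    · exact h4
  have hlim2 : Tendsto (fun n => |g (xs (φ n)) - g y|) atTop (𝓝 |r - g y|) :=
    ((hφlim.sub_const (g y)).abs)
  have : ε ≤ |r - g y| := ge_of_tendsto' hlim2 (fun n => fact5 (φ n))
  rw [hrs, sub_self, abs_zero] at this
  linarith
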